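/- Special case of the robust fractional quadratic matrix inequality (S-procedure direction): let H ∈ ℝ^{p×p} be symmetric, G ∈ ℝ^{p×n}, and 𝒫 ∈ ℝ^{n×n} symmetric positive semidefinite. If there exists λ ≥ 0 such that the block matrix [[H, 0, G],[0, (1−λ)I_m, 0],[Gᵀ, 0, λ𝒫]] is positive semidefinite, then for every X ∈ ℝ^{n×m} with I_m − Xᵀ𝒫X ⪰ 0, the matrix [[H, G·X],[(G·X)ᵀ, I_m]] is positive semidefinite. -/

import Mathlib

open Matrix

theorem s_procedure_sufficiency (p n m : ℕ)
    (H : Matrix (Fin p) (Fin p) ℝ) (hH : H.IsHermitian)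
    (G : Matrix (Fin p) (Fin n) ℝ)
    (Pcal : Matrix (Fin n) (Fin n) ℝ) (hPcal : Pcal.PosSemidef)
    (lam : ℝ) (hlam : 0 ≤ lam)
    (hLMI : (Matrix.fromBlocks
              (Matrix.fromBlocks H 0 0 ((1 - lam) • (1 : Matrix (Fin m) (Fin m) ℝ)))
              (Matrix.fromRows G 0)
              (Matrix.fromCols Gᵀ 0)
              (lam • Pcal)).PosSemidef) :
    ∀ X : Matrix (Fin n) (Fin m) ℝ,
      ((1 : Matrix (Fin m) (Fin m) ℝ) - Xᵀ * Pcal * X).PosSemidef →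
      (Matrix.fromBlocks H (G * X) (G * X)ᵀ (1 : Matrix (Fin m) (Fin m) ℝ)).PosSemidef := by
  intro X hX
  rw [posSemidef_iff_dotProduct_mulVec]
  constructor
  · exact hH.fromBlocks rfl (isHermitian_one)
  intro x
  set x₁ : Fin p → ℝ := x ∘ Sum.inl with hx1
  set x₂ : Fin m → ℝ := x ∘ Sum.inr with hx2
  set x₃ : Fin n → ℝ := X *ᵥ x₂ with hx3
  have hQ := (posSemidef_iff_dotProduct_mulVec.mp hLMI).2 (Sum.elim x x₃)
  have hS := (posSemidef_iff_dotProduct_mulVec.mp hX).2 x₂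
  simp only [star_trivial] at hQ hS ⊢
  have hxe : x = Sum.elim x₁ x₂ := by ext i; cases i <;> rfl
  rw [hxe] at hQ ⊢
  simp only [fromBlocks_mulVec, Sum.elim_comp_inl, Sum.elim_comp_inr,
    sumElim_dotProduct_sumElim, fromRows_mulVec, fromCols_mulVec_sumElim,
    zero_mulVec, mulVec_zero, add_zero, zero_add, smul_mulVec, one_mulVec,
    dotProduct_add, add_dotProduct, dotProduct_smul, sub_mulVec, sub_dotProduct,
    dotProduct_sub, smul_eq_mul, sub_smul, one_smul, dotProduct_zero] at hQ hS ⊢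
  have e1 : x₃ ⬝ᵥ Gᵀ *ᵥ x₁ = x₁ ⬝ᵥ G *ᵥ x₃ := by
    rw [mulVec_transpose, dotProduct_comm, ← dotProduct_mulVec]
  have e2 : (G * X) *ᵥ x₂ = G *ᵥ x₃ := by rw [hx3, mulVec_mulVec]
  have e3 : x₂ ⬝ᵥ (G * X)ᵀ *ᵥ x₁ = x₁ ⬝ᵥ G *ᵥ x₃ := by
    rw [mulVec_transpose, dotProduct_comm, ← dotProduct_mulVec, e2]
  have e4 : x₂ ⬝ᵥ (Xᵀ * Pcal * X) *ᵥ x₂ = x₃ ⬝ᵥ Pcal *ᵥ x₃ := by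
    rw [← mulVec_mulVec, ← mulVec_mulVec, mulVec_transpose, dotProduct_comm,
      ← dotProduct_mulVec, ← hx3, dotProduct_comm]
  rw [e1] at hQ
  rw [e4] at hS
  rw [e2, e3]
  nlinarith [mul_nonneg hlam hS]
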